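/- Let k ≥ 1 and 0 < s ≤ 1. There exists a constant A > 0, depending only on k and s, such that the following holds. Let v : B(0,3) → ℝ be a continuous plurisubharmonic function on the open ball B(0,3) ⊆ ℂ^k, and let u : B(0,3) → ℝ be a continuous function such that both v + u and v − u are plurisubharmonic. Then for every 0 < r ≤ 1/2 one has m_{B(0,1)}(u, r) ≤ 3 · m_{B(0,2)}(v, r^s) + A · (Ω_{B(0,2)}(u) + Ω_{B(0,2)}(v)) · r^{1−s}. -/

import Mathlib

open Metric MeasureTheory Real Set

/-- A continuous function `u` on `Ω ⊆ ℂ^k` is plurisubharmonic if it satisfies the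
sub-mean value inequality on every complex line. -/
def IsPshOn {k : ℕ} (Ω : Set (EuclideanSpace ℂ (Fin k)))
    (u : EuclideanSpace ℂ (Fin k) → ℝ) : Prop :=
  ∀ (a b : EuclideanSpace ℂ (Fin k)) (z₀ : ℂ) (ρ : ℝ), 0 < ρ →
    (∀ z : ℂ, ‖z - z₀‖ ≤ ρ → a + z • b ∈ Ω) →
    u (a + z₀ • b) ≤ (1 / (2 * Real.pi)) *
      ∫ θ in (0:ℝ)..(2 * Real.pi),
        u (a + (z₀ + (ρ : ℂ) * Complex.exp ((θ : ℂ) * Complex.I)) • b)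

/-- The modulus of continuity `m_U(g, r) = sup {|g x - g y| : x, y ∈ U, dist x y ≤ r}`. -/
noncomputable def modCont {X : Type*} [PseudoMetricSpace X] (U : Set X) (g : X → ℝ)
    (r : ℝ) : ℝ :=
  sSup {t : ℝ | ∃ x ∈ U, ∃ y ∈ U, dist x y ≤ r ∧ t = |g x - g y|}

/-- The oscillation `Ω_U(g) = sup_U g - inf_U g = sup {|g x - g y| : x, y ∈ U}`. -/
noncomputable def oscOn {X : Type*} [PseudoMetricSpace X] (U : Set X) (g : X → ℝ) : ℝ :=
  sSup {t : ℝ | ∃ x ∈ U, ∃ y ∈ U, t = |g x - g y|}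

lemma polarCoord_symm_cont : Continuous (fun p : ℝ × ℝ => Complex.polarCoord.symm p) := by
  have : (fun p : ℝ × ℝ => Complex.polarCoord.symm p)
      = fun p : ℝ × ℝ => (p.1 : ℂ) * (Real.cos p.2 + Real.sin p.2 * Complex.I) := by
    funext p; exact Complex.polarCoord_symm_apply p
  rw [this]; fun_prop

lemma polarCoord_symm_exp (p : ℝ × ℝ) :
    Complex.polarCoord.symm p = (p.1 : ℂ) * Complex.exp (p.2 * Complex.I) := by
  rw [Complex.polarCoord_symm_apply, Complex.exp_mul_I]
  push_cast
  ring

lemma setIntegral_ball_translate (f : ℂ → ℝ) (c : ℂ) (δ : ℝ) :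
    ∫ w in ball c δ, f w = ∫ w in ball (0:ℂ) δ, f (c + w) := by
  have h1 : ∫ w in ball (0:ℂ) δ, f (c + w)
      = ∫ w, Set.indicator (ball (0:ℂ) δ) (fun w => f (c + w)) w := by
    rw [integral_indicator measurableSet_ball]
  have h2 : ∀ w : ℂ, Set.indicator (ball (0:ℂ) δ) (fun w => f (c + w)) w
      = Set.indicator (ball c δ) f (c + w) := by
    intro w
    by_cases hw : w ∈ ball (0:ℂ) δ
    · rw [Set.indicator_of_mem hw, Set.indicator_of_mem]
      simpa [mem_ball, dist_eq_norm] using hw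
    · rw [Set.indicator_of_notMem hw, Set.indicator_of_notMem]
      simpa [mem_ball, dist_eq_norm] using hw
  rw [h1]
  simp_rw [h2]
  rw [integral_add_left_eq_self (Set.indicator (ball c δ) f) c,
    integral_indicator measurableSet_ball]

/-- Integrability of the polar integrand on the rectangle. -/
lemma polar_integrand_integrableOn (f : ℂ → ℝ) (c : ℂ) (δ : ℝ) (hδ : 0 < δ)
    (hf : ContinuousOn f (closedBall c δ)) :
    IntegrableOn (fun p : ℝ × ℝ => p.1 * f (c + p.1 * Complex.exp (p.2 * Complex.I)))
      (Icc (0:ℝ) δ ×ˢ Icc (-π) π) := by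
  apply ContinuousOn.integrableOn_compact (isCompact_Icc.prod isCompact_Icc)
  apply ContinuousOn.mul (continuous_fst.continuousOn)
  apply hf.comp
  · fun_prop
  · rintro ⟨ρ, θ⟩ ⟨hρ, hθ⟩
    simp only [mem_closedBall, dist_eq_norm, add_sub_cancel_left]
    rw [norm_mul]
    simp only [Complex.norm_real, Real.norm_eq_abs, Complex.norm_exp]
    simp only [mem_Icc] at hρ
    rw [abs_of_nonneg hρ.1]
    have : ((θ:ℂ) * Complex.I).re = 0 := by simp
    rw [this, Real.exp_zero, mul_one]
    exact hρ.2

/-- Polar coordinates formula for the integral over a disc. -/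
lemma integral_ball_polar (f : ℂ → ℝ) (c : ℂ) (δ : ℝ) (hδ : 0 < δ)
    (hf : ContinuousOn f (closedBall c δ)) :
    ∫ w in ball c δ, f w
      = ∫ ρ in Ioo (0:ℝ) δ, ∫ θ in Ioo (-π) π,
          ρ * f (c + ρ * Complex.exp (θ * Complex.I)) := by
  set H : ℝ × ℝ → ℝ := fun p => p.1 * f (c + p.1 * Complex.exp (p.2 * Complex.I)) with hH
  set g : ℂ → ℝ := (ball (0:ℂ) δ).indicator (fun w => f (c + w)) with hg
  have key := Complex.integral_comp_polarCoord_symm g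
  -- RHS of key
  have hrhs : ∫ p, g p = ∫ w in ball c δ, f w := by
    rw [hg, integral_indicator measurableSet_ball]
    exact (setIntegral_ball_translate f c δ).symm
  -- LHS of key
  have hS : MeasurableSet ((fun p : ℝ × ℝ => Complex.polarCoord.symm p) ⁻¹' ball (0:ℂ) δ) :=
    measurableSet_ball.preimage polarCoord_symm_cont.measurable
  have hpt : ∀ p : ℝ × ℝ, p.1 • g (Complex.polarCoord.symm p)
      = Set.indicator ((fun p : ℝ × ℝ => Complex.polarCoord.symm p) ⁻¹' ball (0:ℂ) δ) H p := by
    intro p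
    by_cases hp : Complex.polarCoord.symm p ∈ ball (0:ℂ) δ
    · rw [Set.indicator_of_mem (Set.mem_preimage.mpr hp), hg, Set.indicator_of_mem hp, hH]
      simp only [smul_eq_mul]
      rw [← polarCoord_symm_exp]
    · rw [Set.indicator_of_notMem (fun h => hp (Set.mem_preimage.mp h)), hg,
        Set.indicator_of_notMem hp]
      simp
  have hset : polarCoord.target ∩ ((fun p : ℝ × ℝ => Complex.polarCoord.symm p) ⁻¹' ball (0:ℂ) δ)
      = Ioo (0:ℝ) δ ×ˢ Ioo (-π) π := by
    ext p
    simp only [Set.mem_inter_iff, Set.mem_preimage, mem_ball, dist_zero_right,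
      Complex.norm_polarCoord_symm, polarCoord_target,
      Set.mem_prod, Set.mem_Ioi, Set.mem_Ioo]
    constructor
    · rintro ⟨⟨h1, h2⟩, h3⟩
      rw [abs_of_pos h1] at h3
      exact ⟨⟨h1, h3⟩, h2⟩
    · rintro ⟨⟨h1, h3⟩, h2⟩
      exact ⟨⟨h1, h2⟩, by rwa [abs_of_pos h1]⟩
  have hlhs : (∫ p in polarCoord.target, p.1 • g (Complex.polarCoord.symm p))
      = ∫ p in Ioo (0:ℝ) δ ×ˢ Ioo (-π) π, H p := by
    simp_rw [hpt]
    rw [setIntegral_indicator hS, hset]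
  -- Fubini
  have hint : IntegrableOn H (Ioo (0:ℝ) δ ×ˢ Ioo (-π) π) := by
    apply (polar_integrand_integrableOn f c δ hδ hf).mono_set
    exact Set.prod_mono Ioo_subset_Icc_self Ioo_subset_Icc_self
  have hfub : ∫ p in Ioo (0:ℝ) δ ×ˢ Ioo (-π) π, H p
      = ∫ ρ in Ioo (0:ℝ) δ, ∫ θ in Ioo (-π) π, H (ρ, θ) := by
    rw [Measure.volume_eq_prod]
    exact setIntegral_prod H (by rwa [← Measure.volume_eq_prod])
  rw [← hrhs, ← key, hlhs, hfub]

/-- Sub-mean value property on circles implies sub-mean value on the disc. -/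
lemma submean_disc (f : ℂ → ℝ) (c : ℂ) (δ : ℝ) (hδ : 0 < δ)
    (hf : ContinuousOn f (closedBall c δ))
    (hsub : ∀ ρ : ℝ, 0 < ρ → ρ ≤ δ →
      f c ≤ (1/(2*π)) * ∫ θ in (0:ℝ)..(2*π), f (c + ρ * Complex.exp (θ * Complex.I))) :
    π * δ^2 * f c ≤ ∫ w in ball c δ, f w := by
  have hπ : (0:ℝ) < π := Real.pi_pos
  rw [integral_ball_polar f c δ hδ hf]
  set H : ℝ × ℝ → ℝ := fun p => p.1 * f (c + p.1 * Complex.exp (p.2 * Complex.I)) with hH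
  -- integrability of the marginal
  have hint : IntegrableOn H (Ioo (0:ℝ) δ ×ˢ Ioo (-π) π) :=
    (polar_integrand_integrableOn f c δ hδ hf).mono_set
      (Set.prod_mono Ioo_subset_Icc_self Ioo_subset_Icc_self)
  have hmarg : IntegrableOn (fun ρ => ∫ θ in Ioo (-π) π, H (ρ, θ)) (Ioo (0:ℝ) δ) := by
    have h1 : Integrable H ((volume.restrict (Ioo (0:ℝ) δ)).prod
        (volume.restrict (Ioo (-π) π))) := by
      rw [Measure.prod_restrict]
      rw [IntegrableOn, Measure.volume_eq_prod] at hint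
      exact hint
    exact h1.integral_prod_left
  -- pointwise lower bound
  have hlow : ∀ ρ ∈ Ioo (0:ℝ) δ, 2 * π * f c * ρ ≤ ∫ θ in Ioo (-π) π, H (ρ, θ) := by
    intro ρ hρ
    obtain ⟨hρ0, hρδ⟩ := hρ
    have hcirc : ∫ θ in Ioo (-π) π, f (c + ρ * Complex.exp (θ * Complex.I))
        = ∫ θ in (0:ℝ)..(2*π), f (c + ρ * Complex.exp (θ * Complex.I)) := by
      have hper : Function.Periodic
          (fun θ : ℝ => f (c + ρ * Complex.exp (θ * Complex.I))) (2*π) := by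
        intro θ
        have h' : ((θ + 2*π : ℝ) : ℂ) * Complex.I = (θ:ℂ) * Complex.I + 2 * (π:ℂ) * Complex.I := by
          push_cast; ring
        simp only [h', Complex.exp_add]
        rw [show (2 * (π:ℂ) * Complex.I) = 2 * ↑π * Complex.I from rfl,
          Complex.exp_two_pi_mul_I, mul_one]
      have h1 : ∫ θ in Ioo (-π) π, f (c + ρ * Complex.exp (θ * Complex.I))
          = ∫ θ in (-π)..π, f (c + ρ * Complex.exp (θ * Complex.I)) := by
        rw [intervalIntegral.integral_of_le (by linarith), integral_Ioc_eq_integral_Ioo]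
      have h2 := hper.intervalIntegral_add_eq (-π) 0
      rw [h1]
      have h3 : -π + 2*π = π := by ring
      rw [h3] at h2
      rw [h2]
      norm_num
    have hH2 : (∫ θ in Ioo (-π) π, H (ρ, θ))
        = ρ * ∫ θ in Ioo (-π) π, f (c + ρ * Complex.exp (θ * Complex.I)) := by
      simp only [hH]
      exact integral_const_mul ρ _
    have hs := hsub ρ hρ0 hρδ.le
    have h2π : (0:ℝ) < 2*π := by positivity
    have : 2 * π * f c ≤ ∫ θ in (0:ℝ)..(2*π), f (c + ρ * Complex.exp (θ * Complex.I)) := by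
      have := mul_le_mul_of_nonneg_left hs h2π.le
      calc 2 * π * f c ≤ 2*π * ((1/(2*π)) *
            ∫ θ in (0:ℝ)..(2*π), f (c + ρ * Complex.exp (θ * Complex.I))) := this
        _ = ∫ θ in (0:ℝ)..(2*π), f (c + ρ * Complex.exp (θ * Complex.I)) := by
            rw [← mul_assoc, mul_one_div_cancel h2π.ne', one_mul]
    rw [hH2, hcirc]
    calc 2 * π * f c * ρ = ρ * (2 * π * f c) := by ring
      _ ≤ ρ * ∫ θ in (0:ℝ)..(2*π), f (c + ρ * Complex.exp (θ * Complex.I)) :=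
          mul_le_mul_of_nonneg_left this hρ0.le
  -- integrate the lower bound
  have hconst : IntegrableOn (fun ρ : ℝ => 2 * π * f c * ρ) (Ioo (0:ℝ) δ) :=
    ((show ContinuousOn (fun ρ : ℝ => 2 * π * f c * ρ) (Icc (0:ℝ) δ) by
        fun_prop).integrableOn_compact isCompact_Icc).mono_set Ioo_subset_Icc_self
  have hmono := setIntegral_mono_on hconst hmarg measurableSet_Ioo hlow
  have hval : ∫ ρ in Ioo (0:ℝ) δ, 2 * π * f c * ρ = π * δ^2 * f c := by
    rw [integral_const_mul]
    have : ∫ ρ in Ioo (0:ℝ) δ, ρ = δ^2/2 := by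
      rw [← integral_Ioc_eq_integral_Ioo, ← intervalIntegral.integral_of_le hδ.le]
      simp [integral_id]
    rw [this]; ring
  calc π * δ^2 * f c = ∫ ρ in Ioo (0:ℝ) δ, 2 * π * f c * ρ := hval.symm
    _ ≤ ∫ ρ in Ioo (0:ℝ) δ, ∫ θ in Ioo (-π) π, H (ρ, θ) := hmono

lemma volball (p : ℂ) (t : ℝ) (ht : 0 ≤ t) :
    (volume (ball p t)).toReal = π * t^2 := by
  rw [Complex.volume_ball]
  rw [ENNReal.toReal_mul, ENNReal.toReal_pow, ENNReal.toReal_ofReal ht, ENNReal.coe_toReal,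
    NNReal.coe_real_pi]
  ring

theorem key {k : ℕ} (u v : EuclideanSpace ℂ (Fin k) → ℝ)
    (hu : ContinuousOn u (ball 0 3)) (hv : ContinuousOn v (ball 0 3))
    (hpvu : IsPshOn (ball 0 3) (v + u)) (hpvd : IsPshOn (ball 0 3) (v - u))
    (δ r M W : ℝ) (hδ0 : 0 < δ) (hδ1 : δ ≤ 1/2) (hr2 : r ≤ 1/2) (hr2δ : r ≤ 2*δ)
    (hM : ∀ p ∈ ball (0:EuclideanSpace ℂ (Fin k)) 2, ∀ q ∈ ball (0:EuclideanSpace ℂ (Fin k)) 2,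
      dist p q ≤ δ → |v p - v q| ≤ M)
    (hW : ∀ p ∈ ball (0:EuclideanSpace ℂ (Fin k)) 2, ∀ q ∈ ball (0:EuclideanSpace ℂ (Fin k)) 2,
      |u p - u q| ≤ W)
    (x y : EuclideanSpace ℂ (Fin k)) (hx : x ∈ ball 0 1) (hy : y ∈ ball 0 1)
    (hxy : dist x y ≤ r) :
    u x - u y ≤ 2*M + 8*W*(r/δ) := by
  have hπ : (0:ℝ) < π := Real.pi_pos
  have hx2 : x ∈ ball (0:EuclideanSpace ℂ (Fin k)) 2 := by
    rw [mem_ball] at hx ⊢; linarith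
  have hy2 : y ∈ ball (0:EuclideanSpace ℂ (Fin k)) 2 := by
    rw [mem_ball] at hy ⊢; linarith
  have hM0 : 0 ≤ M := le_trans (abs_nonneg _) (hM x hx2 x hx2 (by simp [hδ0.le]))
  have hW0 : 0 ≤ W := le_trans (abs_nonneg _) (hW x hx2 x hx2)
  have hr0 : 0 ≤ r := le_trans dist_nonneg hxy
  by_cases hxyeq : x = y
  · rw [hxyeq, sub_self]
    positivity
  -- setup
  have hc0 : 0 < dist x y := dist_pos.mpr hxyeq
  set c : ℝ := dist x y with hc
  have hcr : c ≤ r := hxy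
  have hyx : ‖y - x‖ = c := by rw [hc, dist_eq_norm, norm_sub_rev]
  have hyx0 : ‖y - x‖ ≠ 0 := by rw [hyx]; exact hc0.ne'
  set b : EuclideanSpace ℂ (Fin k) := (‖y - x‖)⁻¹ • (y - x) with hb
  have hbnorm : ‖b‖ = 1 := by
    rw [hb, norm_smul, norm_inv, norm_norm, inv_mul_cancel₀ hyx0]
  set L : ℂ → EuclideanSpace ℂ (Fin k) := fun z => x + z • b with hL
  have hL0 : L 0 = x := by simp [hL]
  have hLc : L (c:ℂ) = y := by
    rw [hL]
    simp only [Complex.coe_smul, hb, smul_smul]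
    rw [← hyx, mul_inv_cancel₀ hyx0, one_smul]
    abel
  have hLnorm : ∀ z : ℂ, ‖L z‖ ≤ ‖x‖ + ‖z‖ := by
    intro z
    calc ‖L z‖ ≤ ‖x‖ + ‖z • b‖ := norm_add_le _ _
      _ = ‖x‖ + ‖z‖ := by
          rw [norm_smul, hbnorm, mul_one]
  have hx1 : ‖x‖ < 1 := by rwa [mem_ball, dist_zero_right] at hx
  have mem3 : ∀ z : ℂ, ‖z‖ ≤ 2 → L z ∈ ball (0:EuclideanSpace ℂ (Fin k)) 3 := by
    intro z hz
    rw [mem_ball, dist_zero_right]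
    calc ‖L z‖ ≤ ‖x‖ + ‖z‖ := hLnorm z
      _ < 3 := by linarith
  have mem2 : ∀ z : ℂ, ‖z‖ ≤ 1 → L z ∈ ball (0:EuclideanSpace ℂ (Fin k)) 2 := by
    intro z hz
    rw [mem_ball, dist_zero_right]
    calc ‖L z‖ ≤ ‖x‖ + ‖z‖ := hLnorm z
      _ < 2 := by linarith
  have distL : ∀ z w : ℂ, dist (L z) (L w) = ‖(z - w)‖ := by
    intro z w
    rw [dist_eq_norm, hL]
    have : x + z • b - (x + w • b) = (z - w) • b := by
      rw [sub_smul]; abel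
    rw [this, norm_smul, hbnorm, mul_one]
  set R : ℝ := δ + c with hR
  have hRpos : 0 < R := by positivity
  have hR1 : R ≤ 1 := by rw [hR]; linarith
  have hLcont : Continuous L := by
    rw [hL]; fun_prop
  -- continuity of compositions on closedBall 0 1
  have hmaps1 : Set.MapsTo L (closedBall (0:ℂ) 1) (ball (0:EuclideanSpace ℂ (Fin k)) 3) := by
    intro z hz
    rw [mem_closedBall, dist_zero_right] at hz
    exact mem3 z (by linarith)
  have hUcont : ContinuousOn (fun z : ℂ => u (L z)) (closedBall (0:ℂ) 1) :=
    hu.comp hLcont.continuousOn hmaps1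
  have hVcont : ContinuousOn (fun z : ℂ => v (L z)) (closedBall (0:ℂ) 1) :=
    hv.comp hLcont.continuousOn hmaps1
  have hUint : IntegrableOn (fun z : ℂ => u (L z)) (closedBall (0:ℂ) 1) :=
    hUcont.integrableOn_compact (isCompact_closedBall _ _)
  have hVint : IntegrableOn (fun z : ℂ => v (L z)) (closedBall (0:ℂ) 1) :=
    hVcont.integrableOn_compact (isCompact_closedBall _ _)
  -- the two sub-mean value inequalities
  have ball0sub : ball (0:ℂ) δ ⊆ closedBall (0:ℂ) 1 := by
    apply (ball_subset_closedBall).trans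
    exact closedBall_subset_closedBall (by linarith)
  have ballcsub : ball (c:ℂ) δ ⊆ closedBall (0:ℂ) 1 := by
    intro z hz
    rw [mem_ball] at hz
    rw [mem_closedBall, dist_zero_right]
    calc ‖z‖ = ‖((z - c) + c)‖ := by ring_nf
      _ ≤ ‖(z - c)‖ + ‖(c:ℂ)‖ := norm_add_le _ _
      _ ≤ δ + c := by
          rw [Complex.norm_real, Real.norm_eq_abs, abs_of_pos hc0]
          have := hz
          rw [Complex.dist_eq] at this
          linarith [this.le]
      _ ≤ 1 := hR1
  have ballRsub : ball (0:ℂ) R ⊆ closedBall (0:ℂ) 1 := by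
    apply (ball_subset_closedBall).trans
    exact closedBall_subset_closedBall hR1
  have cball0sub : closedBall (0:ℂ) δ ⊆ closedBall (0:ℂ) 1 :=
    closedBall_subset_closedBall (by linarith)
  have cballcsub : closedBall (c:ℂ) δ ⊆ closedBall (0:ℂ) 1 := by
    intro z hz
    rw [mem_closedBall] at hz ⊢
    rw [dist_zero_right]
    calc ‖z‖ = ‖((z - c) + c)‖ := by ring_nf
      _ ≤ ‖(z - c)‖ + ‖(c:ℂ)‖ := norm_add_le _ _
      _ ≤ δ + c := by
          rw [Complex.norm_real, Real.norm_eq_abs, abs_of_pos hc0]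
          rw [Complex.dist_eq] at hz
          linarith
      _ ≤ 1 := hR1
  have S1 : π * δ^2 * ((v + u) (L 0)) ≤ ∫ w in ball (0:ℂ) δ, (v + u) (L w) := by
    apply submean_disc (fun z => (v + u) (L z)) 0 δ hδ0
    · exact (hv.add hu).comp hLcont.continuousOn
        (fun z hz => hmaps1 (cball0sub hz))
    · intro ρ hρ0 hρδ
      have := hpvu x b 0 ρ hρ0 (fun z hz => by
        apply mem3
        rw [sub_zero] at hz
        linarith)
      simpa only [hL] using this
  have S2 : π * δ^2 * ((v - u) (L (c:ℂ))) ≤ ∫ w in ball ((c:ℝ):ℂ) δ, (v - u) (L w) := by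
    apply submean_disc (fun z => (v - u) (L z)) (c:ℂ) δ hδ0
    · exact (hv.sub hu).comp hLcont.continuousOn
        (fun z hz => hmaps1 (cballcsub hz))
    · intro ρ hρ0 hρδ
      have := hpvd x b (c:ℂ) ρ hρ0 (fun z hz => by
        apply mem3
        have : ‖z‖ ≤ ‖(z - c)‖ + ‖(c:ℂ)‖ := by
          calc ‖z‖ = ‖((z - c) + c)‖ := by ring_nf
            _ ≤ _ := norm_add_le _ _
        rw [Complex.norm_real, Real.norm_eq_abs, abs_of_pos hc0] at this
        have h2 : ‖z‖ ≤ ρ + c := by linarith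
        linarith)
      simpa only [hL] using this
  -- volume facts
  have hvol : (volume (ball (0:ℂ) δ)).toReal = π * δ^2 := volball _ _ hδ0.le
  have hvolc : (volume (ball ((c:ℝ):ℂ) δ)).toReal = π * δ^2 := volball _ _ hδ0.le
  have hvolR : (volume (ball (0:ℂ) R)).toReal = π * R^2 := volball _ _ hRpos.le
  -- comparison of v-integrals with the value at center
  have I3 : ∫ w in ball (0:ℂ) δ, v (L w) ≤ π * δ^2 * (v x + M) := by
    have hmono : ∫ w in ball (0:ℂ) δ, v (L w)
        ≤ ∫ _ in ball (0:ℂ) δ, (v x + M) := by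
      apply setIntegral_mono_on (hVint.mono_set ball0sub)
        (integrableOn_const measure_ball_lt_top.ne) measurableSet_ball
      intro w hw
      rw [mem_ball, Complex.dist_eq, sub_zero] at hw
      have hw2 : L w ∈ ball (0:EuclideanSpace ℂ (Fin k)) 2 := mem2 w (by linarith)
      have hd : dist (L w) x ≤ δ := by
        rw [← hL0, distL, sub_zero]; linarith
      have := hM (L w) hw2 x hx2 hd
      have := abs_le.mp this
      linarith [this.2]
    rw [setIntegral_const, measureReal_def, hvol, smul_eq_mul] at hmono
    exact hmono
  have I4 : ∫ w in ball ((c:ℝ):ℂ) δ, v (L w) ≤ π * δ^2 * (v y + M) := by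
    have hmono : ∫ w in ball ((c:ℝ):ℂ) δ, v (L w)
        ≤ ∫ _ in ball ((c:ℝ):ℂ) δ, (v y + M) := by
      apply setIntegral_mono_on (hVint.mono_set ballcsub)
        (integrableOn_const measure_ball_lt_top.ne) measurableSet_ball
      intro w hw
      rw [mem_ball, Complex.dist_eq] at hw
      have habs : ‖w‖ ≤ 1 := by
        calc ‖w‖ = ‖((w - c) + c)‖ := by ring_nf
          _ ≤ ‖(w - c)‖ + ‖(c:ℂ)‖ := norm_add_le _ _
          _ ≤ 1 := by
              rw [Complex.norm_real, Real.norm_eq_abs, abs_of_pos hc0]; linarith [hw.le, hR1]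
      have hw2 : L w ∈ ball (0:EuclideanSpace ℂ (Fin k)) 2 := mem2 w habs
      have hd : dist (L w) y ≤ δ := by
        rw [← hLc, distL]; exact hw.le
      have := abs_le.mp (hM (L w) hw2 y hy2 hd)
      linarith [this.2]
    rw [setIntegral_const, measureReal_def, hvolc, smul_eq_mul] at hmono
    exact hmono
  -- the shifted-disc comparison for u
  set Uf : ℂ → ℝ := fun z => u (L z) - u x with hUf
  have hUfint : IntegrableOn Uf (closedBall (0:ℂ) 1) := hUint.sub (integrableOn_const
    (measure_closedBall_lt_top).ne)
  have hUfbd : ∀ z ∈ closedBall (0:ℂ) 1, ‖Uf z‖ ≤ W := by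
    intro z hz
    rw [mem_closedBall, dist_zero_right] at hz
    have := hW (L z) (mem2 z hz) x hx2
    simpa [hUf] using this
  have hsub0R : ball (0:ℂ) δ ⊆ ball (0:ℂ) R := ball_subset_ball (by rw [hR]; linarith)
  have hsubcR : ball ((c:ℝ):ℂ) δ ⊆ ball (0:ℂ) R := by
    intro w hw
    rw [mem_ball, Complex.dist_eq] at hw
    rw [mem_ball, Complex.dist_eq, sub_zero]
    calc ‖w‖ = ‖((w - c) + c)‖ := by ring_nf
      _ ≤ ‖(w - c)‖ + ‖(c:ℂ)‖ := norm_add_le _ _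
      _ < δ + c := by rw [Complex.norm_real, Real.norm_eq_abs, abs_of_pos hc0]; linarith
  have hannvol : ∀ s : Set ℂ, s ⊆ ball (0:ℂ) R → MeasurableSet s →
      (volume s).toReal = π * δ^2 →
      (volume (ball (0:ℂ) R \ s)).toReal = π * R^2 - π * δ^2 := by
    intro s hs hms hvs
    rw [measure_diff hs hms.nullMeasurableSet
        (lt_of_le_of_lt (measure_mono hs) measure_ball_lt_top).ne,
      ENNReal.toReal_sub_of_le (measure_mono hs) measure_ball_lt_top.ne, hvs, hvolR]
  have hbound : ∀ s : Set ℂ, s ⊆ ball (0:ℂ) R → MeasurableSet s →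
      (volume s).toReal = π * δ^2 →
      |∫ w in ball (0:ℂ) R \ s, Uf w| ≤ W * (π * R^2 - π * δ^2) := by
    intro s hs hms hvs
    have h1 : ‖∫ w in ball (0:ℂ) R \ s, Uf w‖
        ≤ W * (volume (ball (0:ℂ) R \ s)).toReal := by
      apply norm_setIntegral_le_of_norm_le_const
        (lt_of_le_of_lt (measure_mono diff_subset) measure_ball_lt_top)
      · intro z hz
        exact hUfbd z (ballRsub hz.1)
    rw [hannvol s hs hms hvs] at h1
    exact h1
  have hsplit : ∀ s : Set ℂ, s ⊆ ball (0:ℂ) R → MeasurableSet s →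
      ∫ w in ball (0:ℂ) R, Uf w
        = (∫ w in s, Uf w) + ∫ w in ball (0:ℂ) R \ s, Uf w := by
    intro s hs hms
    rw [← setIntegral_union disjoint_sdiff_right (measurableSet_ball.diff hms)
      (hUfint.mono_set (hs.trans ballRsub))
      (hUfint.mono_set ((diff_subset).trans ballRsub)), union_diff_cancel hs]
  have hI5 : (∫ w in ball (0:ℂ) δ, Uf w) - ∫ w in ball ((c:ℝ):ℂ) δ, Uf w
      ≤ 2 * (W * (π * R^2 - π * δ^2)) := by
    have e0 := hsplit _ hsub0R measurableSet_ball
    have ec := hsplit _ hsubcR measurableSet_ball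
    have b0 := abs_le.mp (hbound _ hsub0R measurableSet_ball hvol)
    have bc := abs_le.mp (hbound _ hsubcR measurableSet_ball hvolc)
    linarith [b0.1, b0.2, bc.1, bc.2]
  -- translate back to u ∘ L
  have econst : ∀ s : Set ℂ, s ⊆ closedBall (0:ℂ) 1 → MeasurableSet s →
      (volume s).toReal = π * δ^2 →
      ∫ w in s, u (L w) = (∫ w in s, Uf w) + π * δ^2 * u x := by
    intro s hs1 hms hvs
    have hfin : volume s < ⊤ :=
      lt_of_le_of_lt (measure_mono hs1) measure_closedBall_lt_top
    calc ∫ w in s, u (L w) = ∫ w in s, (Uf w + u x) := by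
          apply setIntegral_congr_fun hms
          intro w _; simp [hUf]
      _ = (∫ w in s, Uf w) + ∫ _ in s, u x :=
          integral_add (hUfint.mono_set hs1) (integrableOn_const hfin.ne)
      _ = (∫ w in s, Uf w) + π * δ^2 * u x := by
          rw [setIntegral_const, measureReal_def, hvs, smul_eq_mul]
  have e0 := econst _ ball0sub measurableSet_ball hvol
  have ec := econst _ ballcsub measurableSet_ball hvolc
  clear_value b L Uf c R
  -- diff of u-integrals
  have hI5' : (∫ w in ball (0:ℂ) δ, u (L w)) - ∫ w in ball ((c:ℝ):ℂ) δ, u (L w)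
      ≤ 8 * π * δ * c * W := by
    rw [e0, ec]
    have hRδ : π * R^2 - π * δ^2 ≤ 4 * π * δ * c := by
      have h0 : R^2 - δ^2 = c * (2*δ + c) := by rw [hR]; ring
      have h1 : c*(2*δ+c) ≤ 4*δ*c := by
        have hle : 2*δ + c ≤ 4*δ := by linarith
        calc c*(2*δ+c) ≤ c*(4*δ) := mul_le_mul_of_nonneg_left hle hc0.le
          _ = 4*δ*c := by ring
      have h2 : π * (R^2 - δ^2) ≤ π * (4*δ*c) := by
        rw [h0]; exact mul_le_mul_of_nonneg_left h1 hπ.le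
      have h2a : π*(R^2 - δ^2) = π*R^2 - π*δ^2 := by ring
      have h2b : π*(4*δ*c) = 4*π*δ*c := by ring
      linarith [h2]
    have h3 : W*(π*R^2 - π*δ^2) ≤ W*(4*π*δ*c) := mul_le_mul_of_nonneg_left hRδ hW0
    have h4 : 2*(W*(π*R^2 - π*δ^2)) ≤ 8*π*δ*c*W := by linarith
    linarith [hI5]
  -- split the psh integrals
  have hsplitP : ∫ w in ball (0:ℂ) δ, (v + u) (L w)
      = (∫ w in ball (0:ℂ) δ, v (L w)) + ∫ w in ball (0:ℂ) δ, u (L w) := by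
    have : ∀ w : ℂ, (v + u) (L w) = v (L w) + u (L w) := fun w => rfl
    simp_rw [this]
    exact integral_add (hVint.mono_set ball0sub) (hUint.mono_set ball0sub)
  have hsplitQ : ∫ w in ball ((c:ℝ):ℂ) δ, (v - u) (L w)
      = (∫ w in ball ((c:ℝ):ℂ) δ, v (L w)) - ∫ w in ball ((c:ℝ):ℂ) δ, u (L w) := by
    have : ∀ w : ℂ, (v - u) (L w) = v (L w) - u (L w) := fun w => rfl
    simp_rw [this]
    exact integral_sub (hVint.mono_set ballcsub) (hUint.mono_set ballcsub)
  rw [hsplitP, hL0] at S1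
  rw [hsplitQ, hLc] at S2
  have hvux : (v + u) x = v x + u x := rfl
  have hvuy : (v - u) y = v y - u y := rfl
  rw [hvux] at S1
  rw [hvuy] at S2
  -- assemble
  have hmain : π * δ^2 * (u x - u y) ≤ 2 * (π * δ^2) * M + 8 * π * δ * c * W := by
    ring_nf at S1 S2 I3 I4 hI5' ⊢
    linarith
  have hδne : δ ≠ 0 := hδ0.ne'
  have hdiv : π * δ^2 * (8*W*(r/δ)) = 8 * π * δ * r * W := by
    field_simp
  have hcw : 8 * π * δ * c * W ≤ 8 * π * δ * r * W := by
    calc 8*π*δ*c*W = (8*π*δ*W)*c := by ring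
      _ ≤ (8*π*δ*W)*r := mul_le_mul_of_nonneg_left hcr (by positivity)
      _ = 8*π*δ*r*W := by ring
  have hgoal : π*δ^2*(u x - u y) ≤ π*δ^2*(2*M + 8*W*(r/δ)) := by
    have hexp : π*δ^2*(2*M + 8*W*(r/δ)) = 2*(π*δ^2)*M + 8*π*δ*r*W := by
      rw [mul_add, hdiv]; ring
    rw [hexp]; linarith
  exact le_of_mul_le_mul_left hgoal (by positivity : (0:ℝ) < π * δ^2)

/-- Corollary 2.8 of the paper. Let `v` be continuous plurisubharmonic on
`B(0,3) ⊆ ℂ^k` and `u` continuous with `v + u` and `v - u` plurisubharmonic (encoding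
`|dd^c u| ≤ dd^c v`). Then for `0 < s ≤ 1` there is `A = A(k,s) > 0` such that for
`0 < r ≤ 1/2`:
`m_{B(0,1)}(u, r) ≤ 3 m_{B(0,2)}(v, r^s) + A (Ω_{B(0,2)}(u) + Ω_{B(0,2)}(v)) r^{1-s}`. -/
theorem stmt_3 (k : ℕ) (hk : 1 ≤ k) (s : ℝ) (hs0 : 0 < s) (hs1 : s ≤ 1) :
    ∃ A : ℝ, 0 < A ∧
      ∀ u v : EuclideanSpace ℂ (Fin k) → ℝ,
        ContinuousOn u (ball 0 3) → ContinuousOn v (ball 0 3) →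
        IsPshOn (ball 0 3) v →
        IsPshOn (ball 0 3) (v + u) → IsPshOn (ball 0 3) (v - u) →
        ∀ r : ℝ, 0 < r → r ≤ 1 / 2 →
          modCont (ball 0 1) u r ≤
            3 * modCont (ball 0 2) v (r ^ s) +
              A * (oscOn (ball 0 2) u + oscOn (ball 0 2) v) * r ^ (1 - s) := by
  refine ⟨16, by norm_num, ?_⟩
  intro u v hu hv _hpshv hpvu hpvd r hr0 hr12
  have hr1 : r ≤ 1 := by linarith
  have hrs0 : 0 < r ^ s := Real.rpow_pos_of_pos hr0 s
  have hrs1 : r ^ s ≤ 1 := Real.rpow_le_one hr0.le hr1 hs0.le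
  have hr1s0 : 0 ≤ r ^ (1 - s) := (Real.rpow_pos_of_pos hr0 _).le
  set δ : ℝ := r ^ s / 2 with hδdef
  have hδ0 : 0 < δ := by positivity
  have hδ1 : δ ≤ 1/2 := by rw [hδdef]; linarith
  have hr2δ : r ≤ 2 * δ := by
    rw [hδdef]
    have : r ^ (1:ℝ) ≤ r ^ s := Real.rpow_le_rpow_of_exponent_ge hr0 hr1 hs1
    rw [Real.rpow_one] at this
    linarith
  -- boundedness of u and v on closedBall 0 2
  have hsub23 : closedBall (0:EuclideanSpace ℂ (Fin k)) 2 ⊆ ball 0 3 :=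
    closedBall_subset_ball (by norm_num)
  obtain ⟨Cu, hCu⟩ := (isCompact_closedBall (0:EuclideanSpace ℂ (Fin k)) 2)
    |>.exists_bound_of_continuousOn (hu.mono hsub23)
  obtain ⟨Cv, hCv⟩ := (isCompact_closedBall (0:EuclideanSpace ℂ (Fin k)) 2)
    |>.exists_bound_of_continuousOn (hv.mono hsub23)
  have hball2 : ball (0:EuclideanSpace ℂ (Fin k)) 2 ⊆ closedBall 0 2 := ball_subset_closedBall
  -- sup sets
  set Sv : Set ℝ := {t : ℝ | ∃ x ∈ ball (0:EuclideanSpace ℂ (Fin k)) 2,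
    ∃ y ∈ ball (0:EuclideanSpace ℂ (Fin k)) 2, dist x y ≤ r ^ s ∧ t = |v x - v y|} with hSv
  set Su : Set ℝ := {t : ℝ | ∃ x ∈ ball (0:EuclideanSpace ℂ (Fin k)) 2,
    ∃ y ∈ ball (0:EuclideanSpace ℂ (Fin k)) 2, t = |u x - u y|} with hSu
  set Svo : Set ℝ := {t : ℝ | ∃ x ∈ ball (0:EuclideanSpace ℂ (Fin k)) 2,
    ∃ y ∈ ball (0:EuclideanSpace ℂ (Fin k)) 2, t = |v x - v y|} with hSvo
  have hbSv : BddAbove Sv := by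
    refine ⟨2 * Cv, ?_⟩
    rintro t ⟨x, hx, y, hy, -, rfl⟩
    have h1 := hCv x (hball2 hx)
    have h2 := hCv y (hball2 hy)
    rw [Real.norm_eq_abs] at h1 h2
    calc |v x - v y| ≤ |v x| + |v y| := abs_sub _ _
      _ ≤ 2 * Cv := by linarith
  have hbSu : BddAbove Su := by
    refine ⟨2 * Cu, ?_⟩
    rintro t ⟨x, hx, y, hy, rfl⟩
    have h1 := hCu x (hball2 hx)
    have h2 := hCu y (hball2 hy)
    rw [Real.norm_eq_abs] at h1 h2
    calc |u x - u y| ≤ |u x| + |u y| := abs_sub _ _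
      _ ≤ 2 * Cu := by linarith
  have hbSvo : BddAbove Svo := by
    refine ⟨2 * Cv, ?_⟩
    rintro t ⟨x, hx, y, hy, rfl⟩
    have h1 := hCv x (hball2 hx)
    have h2 := hCv y (hball2 hy)
    rw [Real.norm_eq_abs] at h1 h2
    calc |v x - v y| ≤ |v x| + |v y| := abs_sub _ _
      _ ≤ 2 * Cv := by linarith
  have h0mem : (0:EuclideanSpace ℂ (Fin k)) ∈ ball (0:EuclideanSpace ℂ (Fin k)) 2 :=
    mem_ball_self (by norm_num)
  set M : ℝ := modCont (ball (0:EuclideanSpace ℂ (Fin k)) 2) v (r ^ s) with hMdef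
  set W : ℝ := oscOn (ball (0:EuclideanSpace ℂ (Fin k)) 2) u with hWdef
  set Wv : ℝ := oscOn (ball (0:EuclideanSpace ℂ (Fin k)) 2) v with hWvdef
  have hMeq : M = sSup Sv := rfl
  have hWeq : W = sSup Su := rfl
  have hWveq : Wv = sSup Svo := rfl
  have hM0 : 0 ≤ M := by
    rw [hMeq]
    refine le_csSup hbSv ⟨0, h0mem, 0, h0mem, by simp [hrs0.le], by simp⟩
  have hW0 : 0 ≤ W := by
    rw [hWeq]
    refine le_csSup hbSu ⟨0, h0mem, 0, h0mem, by simp⟩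
  have hWv0 : 0 ≤ Wv := by
    rw [hWveq]
    refine le_csSup hbSvo ⟨0, h0mem, 0, h0mem, by simp⟩
  have hMpt : ∀ p ∈ ball (0:EuclideanSpace ℂ (Fin k)) 2,
      ∀ q ∈ ball (0:EuclideanSpace ℂ (Fin k)) 2, dist p q ≤ δ → |v p - v q| ≤ M := by
    intro p hp q hq hd
    rw [hMeq]
    exact le_csSup hbSv ⟨p, hp, q, hq, le_trans hd (by rw [hδdef]; linarith), rfl⟩
  have hWpt : ∀ p ∈ ball (0:EuclideanSpace ℂ (Fin k)) 2,
      ∀ q ∈ ball (0:EuclideanSpace ℂ (Fin k)) 2, |u p - u q| ≤ W := by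
    intro p hp q hq
    rw [hWeq]
    exact le_csSup hbSu ⟨p, hp, q, hq, rfl⟩
  -- the bound for each pair
  have hrδ : r / δ = 2 * r ^ (1 - s) := by
    have h1 : r ^ (1 - s) = r / r ^ s := by
      rw [Real.rpow_sub hr0, Real.rpow_one]
    rw [h1, hδdef]
    field_simp
  have hbd : ∀ x ∈ ball (0:EuclideanSpace ℂ (Fin k)) 1,
      ∀ y ∈ ball (0:EuclideanSpace ℂ (Fin k)) 1, dist x y ≤ r →
      |u x - u y| ≤ 2 * M + 16 * W * r ^ (1 - s) := by
    intro x hx y hy hxy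
    have k1 := key u v hu hv hpvu hpvd δ r M W hδ0 hδ1 hr12 hr2δ hMpt hWpt x y hx hy hxy
    have k2 := key u v hu hv hpvu hpvd δ r M W hδ0 hδ1 hr12 hr2δ hMpt hWpt y x hy hx
      (by rwa [dist_comm])
    have habs : |u x - u y| ≤ 2*M + 8*W*(r/δ) := abs_sub_le_iff.mpr ⟨k1, k2⟩
    calc |u x - u y| ≤ 2*M + 8*W*(r/δ) := habs
      _ = 2*M + 16*W*r^(1-s) := by rw [hrδ]; ring
  -- conclude via sSup
  have hRHS0 : 0 ≤ 3 * M + 16 * (W + Wv) * r ^ (1 - s) := by positivity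
  apply Real.sSup_le _ hRHS0
  rintro t ⟨x, hx, y, hy, hxy, rfl⟩
  calc |u x - u y| ≤ 2 * M + 16 * W * r ^ (1 - s) := hbd x hx y hy hxy
    _ ≤ 3 * M + 16 * (W + Wv) * r ^ (1 - s) := by nlinarith [mul_nonneg hWv0 hr1s0]
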